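/- For every r > 0 and every 2-dimensional linear subspace L ⊆ ℝ⁴ with orthonormal basis {u, v}, one has ⟨Q(r)u, u⟩ + ⟨Q(r)v, v⟩ > 0, where Q(r) is the 4×4 diagonal matrix diag(1, r·a'(r)/a(r), r·b'(r)/b(r), r·c'(r)/c(r)). (This expresses the two-convexity of the squared distance function r² to the minimal sphere in the Atiyah–Hitchin manifold.) -/

import Mathlib

open Matrix

private lemma aux_bessel (p q x1 x2 x3 y1 y2 y3 : ℝ)
    (hu : p^2 + x1^2 + x2^2 + x3^2 = 1) (hv : q^2 + y1^2 + y2^2 + y3^2 = 1)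
    (huv : p*q + x1*y1 + x2*y2 + x3*y3 = 0) : p^2 + q^2 ≤ 1 := by
  have key : 1 - p^2 - q^2 =
      (p*p + q*q - 1)^2 + (p*x1 + q*y1)^2 + (p*x2 + q*y2)^2 + (p*x3 + q*y3)^2 := by
    linear_combination (-(p^2)) * hu + (-(q^2)) * hv + (-(2*p*q)) * huv
  nlinarith [sq_nonneg (p*p + q*q - 1), sq_nonneg (p*x1 + q*y1), sq_nonneg (p*x2 + q*y2),
    sq_nonneg (p*x3 + q*y3)]

private lemma aux_quad (d : Fin 4 → ℝ) (x : EuclideanSpace ℝ (Fin 4)) :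
    inner (𝕜 := ℝ) (Matrix.toEuclideanLin (Matrix.diagonal d) x) x
      = ∑ i, d i * (x i)^2 := by
  simp only [PiLp.inner_apply, RCLike.inner_apply, conj_trivial, Matrix.toEuclideanLin_apply]
  exact Finset.sum_congr rfl fun i _ => by
    show x i * (Matrix.diagonal d *ᵥ _) i = _
    rw [Matrix.mulVec_diagonal]
    show x i * (d i * x i) = _
    ring

private lemma aux_norm (x : EuclideanSpace ℝ (Fin 4)) (h : ‖x‖ = 1) : ∑ i, (x i)^2 = 1 := by
  have := real_inner_self_eq_norm_sq x
  rw [h] at this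
  simp only [PiLp.inner_apply, RCLike.inner_apply, conj_trivial] at this
  simpa [sq] using this.trans (by norm_num)

private lemma aux_mvt (a a' a'' : ℝ → ℝ) (hca : ContinuousOn a (Set.Ici 0))
    (hda : ∀ r > (0:ℝ), HasDerivAt a (a' r) r)
    (hdda : ∀ r > (0:ℝ), HasDerivAt a' (a'' r) r)
    (ha'' : ∀ r > (0:ℝ), a'' r < 0) (hia : a 0 = 0)
    (r : ℝ) (hr : 0 < r) : r * a' r < a r := by
  obtain ⟨ξ, hξ, hslope⟩ := exists_hasDerivAt_eq_slope a a' hr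
    (hca.mono (Set.Icc_subset_Ici_self))
    (fun x hx => hda x hx.1)
  have hanti : StrictAntiOn a' (Set.Icc ξ r) := by
    apply strictAntiOn_of_deriv_neg (convex_Icc _ _)
    · intro x hx
      exact ((hdda x (hξ.1.trans_le hx.1)).continuousAt).continuousWithinAt
    · intro x hx
      rw [interior_Icc] at hx
      rw [(hdda x (hξ.1.trans hx.1)).deriv]
      exact ha'' x (hξ.1.trans hx.1)
  have h2 : a' r < a' ξ := hanti ⟨le_refl _, hξ.2.le⟩ ⟨hξ.2.le, le_refl _⟩ hξ.2
  rw [hia] at hslope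
  have : a r = a' ξ * r := by rw [hslope, sub_zero, sub_zero, div_mul_cancel₀ _ hr.ne']
  nlinarith

/-- Two-convexity of the squared distance function to the minimal sphere in the
Atiyah–Hitchin manifold: for every `r > 0` and every 2-dimensional subspace
`L ⊆ ℝ⁴` with orthonormal basis `{u, v}`, one has `⟨Q(r)u, u⟩ + ⟨Q(r)v, v⟩ > 0`,
where `Q(r) = diag(1, r·a'(r)/a(r), r·b'(r)/b(r), r·c'(r)/c(r))`. -/
theorem atiyah_hitchin_two_convexity
    (m : ℝ) (hm : 0 < m)
    (a b c a' b' c' a'' b'' c'' : ℝ → ℝ)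
    (hca : ContinuousOn a (Set.Ici 0))
    (hcb : ContinuousOn b (Set.Ici 0))
    (hcc : ContinuousOn c (Set.Ici 0))
    (hda : ∀ r > (0:ℝ), HasDerivAt a (a' r) r)
    (hdb : ∀ r > (0:ℝ), HasDerivAt b (b' r) r)
    (hdc : ∀ r > (0:ℝ), HasDerivAt c (c' r) r)
    (hdda : ∀ r > (0:ℝ), HasDerivAt a' (a'' r) r)
    (hddb : ∀ r > (0:ℝ), HasDerivAt b' (b'' r) r)
    (hddc : ∀ r > (0:ℝ), HasDerivAt c' (c'' r) r)
    (hODEa : ∀ r > (0:ℝ), a' r = (a r ^ 2 - (b r - c r) ^ 2) / (2 * b r * c r))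
    (hODEb : ∀ r > (0:ℝ), b' r = (b r ^ 2 - (c r - a r) ^ 2) / (2 * c r * a r))
    (hODEc : ∀ r > (0:ℝ), c' r = (c r ^ 2 - (a r - b r) ^ 2) / (2 * a r * b r))
    (hia : a 0 = 0) (hib : b 0 = -m) (hic : c 0 = m)
    (hapos : ∀ r > (0:ℝ), 0 < a r)
    (hcpos : ∀ r > (0:ℝ), 0 < c r)
    (hbneg : ∀ r > (0:ℝ), b r < 0)
    (ha' : ∀ r > (0:ℝ), 0 < a' r)
    (hb' : ∀ r > (0:ℝ), 0 < b' r)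
    (hc' : ∀ r > (0:ℝ), 0 < c' r)
    (ha'' : ∀ r > (0:ℝ), a'' r < 0)
    (hac : ∀ r > (0:ℝ), a r < c r)
    (habc : ∀ r > (0:ℝ), b r + c r < a r) :
    ∀ r > (0:ℝ), ∀ L : Submodule ℝ (EuclideanSpace ℝ (Fin 4)),
      Module.finrank ℝ L = 2 →
      ∀ u v : EuclideanSpace ℝ (Fin 4), u ∈ L → v ∈ L →
        ‖u‖ = 1 → ‖v‖ = 1 → inner (𝕜 := ℝ) u v = 0 →
        0 < inner (𝕜 := ℝ)
              (Matrix.toEuclideanLin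
                (Matrix.diagonal ![1, r * a' r / a r, r * b' r / b r, r * c' r / c r]) u) u
            + inner (𝕜 := ℝ)
              (Matrix.toEuclideanLin
                (Matrix.diagonal ![1, r * a' r / a r, r * b' r / b r, r * c' r / c r]) v) v := by
  intro r hr L hL u v hu hv hnu hnv huv
  -- basic positivity facts at r
  have hA : 0 < a r := hapos r hr
  have hB : b r < 0 := hbneg r hr
  have hC : 0 < c r := hcpos r hr
  have hA0 : a r ≠ 0 := ne_of_gt hA
  have hB0 : b r ≠ 0 := ne_of_lt hB
  have hC0 : c r ≠ 0 := ne_of_gt hC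
  set d1 : ℝ := r * a' r / a r with hd1def
  set d2 : ℝ := r * b' r / b r with hd2def
  set d3 : ℝ := r * c' r / c r with hd3def
  have hd1pos : 0 < d1 := div_pos (mul_pos hr (ha' r hr)) hA
  have hd3pos : 0 < d3 := div_pos (mul_pos hr (hc' r hr)) hC
  have hd2neg : d2 < 0 := div_neg_of_pos_of_neg (mul_pos hr (hb' r hr)) hB
  -- the pairwise sums with d2 are positive
  have key12 : d1 + d2 = r * (a r + b r - c r) / (a r * b r) := by
    rw [hd1def, hd2def, hODEa r hr, hODEb r hr]
    field_simp
    ring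
  have h12 : 0 < d1 + d2 := by
    rw [key12]
    apply div_pos_of_neg_of_neg
    · have h1 : a r + b r - c r < 0 := by linarith [hac r hr]
      nlinarith
    · nlinarith
  have key32 : d3 + d2 = r * (b r + c r - a r) / (c r * b r) := by
    rw [hd3def, hd2def, hODEc r hr, hODEb r hr]
    field_simp
    ring
  have h32 : 0 < d3 + d2 := by
    rw [key32]
    apply div_pos_of_neg_of_neg
    · have h1 : b r + c r - a r < 0 := by linarith [habc r hr]
      nlinarith
    · nlinarith
  have hd1le1 : d1 ≤ 1 := by
    rw [hd1def]
    rw [div_le_one hA]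
    exact (aux_mvt a a' a'' hca hda hdda ha'' hia r hr).le
  have h02 : 0 < 1 + d2 := by linarith
  -- coordinate sums
  have hU : u 0 ^2 + u 1 ^2 + u 2 ^2 + u 3 ^2 = 1 := by
    have := aux_norm u hnu; rwa [Fin.sum_univ_four] at this
  have hV : v 0 ^2 + v 1 ^2 + v 2 ^2 + v 3 ^2 = 1 := by
    have := aux_norm v hnv; rwa [Fin.sum_univ_four] at this
  have hUV : u 0 * v 0 + u 1 * v 1 + u 2 * v 2 + u 3 * v 3 = 0 := by
    have : (∑ i, u i * v i) = 0 := by simpa [PiLp.inner_apply, mul_comm] using huv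
    rwa [Fin.sum_univ_four] at this
  have hbes : u 2 ^2 + v 2 ^2 ≤ 1 :=
    aux_bessel (u 2) (v 2) (u 0) (u 1) (u 3) (v 0) (v 1) (v 3)
      (by linarith) (by linarith) (by linarith)
  -- rewrite the goal as an explicit sum
  rw [aux_quad, aux_quad, Fin.sum_univ_four, Fin.sum_univ_four]
  simp only [Matrix.cons_val_zero, Matrix.cons_val_one, Matrix.head_cons,
    Matrix.cons_val_two, Matrix.tail_cons, Matrix.cons_val_three]
  -- final linear arithmetic with minimum trick
  set e : ℝ := min (min 1 d1) d3 with hedef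
  have he1 : e ≤ 1 := le_trans (min_le_left _ _) (min_le_left _ _)
  have hed1 : e ≤ d1 := le_trans (min_le_left _ _) (min_le_right _ _)
  have hed3 : e ≤ d3 := min_le_right _ _
  have hed2 : 0 < e + d2 := by
    rcases min_cases (min 1 d1) d3 with ⟨h, _⟩ | ⟨h, _⟩
    · rcases min_cases 1 d1 with ⟨h', _⟩ | ⟨h', _⟩ <;> rw [hedef, h, h'] <;> linarith
    · rw [hedef, h]; linarith
  have t0 := sq_nonneg (u 0); have t0' := sq_nonneg (v 0)
  have t1 := sq_nonneg (u 1); have t1' := sq_nonneg (v 1)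
  have t2 := sq_nonneg (u 2); have t2' := sq_nonneg (v 2)
  have t3 := sq_nonneg (u 3); have t3' := sq_nonneg (v 3)
  have hes : e * ((u 0^2+v 0^2) + (u 1^2+v 1^2) + (u 2^2+v 2^2) + (u 3^2+v 3^2)) = 2*e := by
    linear_combination e*hU + e*hV
  linarith [mul_nonneg (sub_nonneg.2 he1) (by linarith : (0:ℝ) ≤ u 0 ^2 + v 0 ^2),
    mul_nonneg (sub_nonneg.2 hed1) (by linarith : (0:ℝ) ≤ u 1 ^2 + v 1 ^2),
    mul_nonneg (sub_nonneg.2 hed3) (by linarith : (0:ℝ) ≤ u 3 ^2 + v 3 ^2),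
    mul_nonneg (by linarith : (0:ℝ) ≤ 1 - (u 2 ^2 + v 2 ^2)) (by linarith : (0:ℝ) ≤ e - d2),
    hes, hed2]
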